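/- Let k > 0, t₀ ∈ ℝ, t₁ > 0, and let f : ℝ → ℝ be differentiable with f'(t) ≤ k - f(t)² for all t, and f(t₀) = √k · coth(√k · t₁). Then for all t ∈ (-t₁, 0], f(t₀ + t) ≥ √k · coth(√k · (t₁ + t)). -/

import Mathlib

noncomputable def coth (x : ℝ) : ℝ := Real.cosh x / Real.sinh x

lemma coth_hasDerivAt {y : ℝ} (hy : Real.sinh y ≠ 0) :
    HasDerivAt coth (1 - coth y ^ 2) y := by
  have h := (Real.hasDerivAt_cosh y).div (Real.hasDerivAt_sinh y) hy
  refine h.congr_deriv ?_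
  have hc := Real.cosh_sq_sub_sinh_sq y
  simp only [coth]
  field_simp

theorem riccati_comparison (k t₀ t₁ : ℝ) (hk : 0 < k) (ht₁ : 0 < t₁)
    (f : ℝ → ℝ) (hf : Differentiable ℝ f)
    (hineq : ∀ t : ℝ, deriv f t ≤ k - (f t) ^ 2)
    (hinit : f t₀ = Real.sqrt k * coth (Real.sqrt k * t₁)) :
    ∀ t ∈ Set.Ioc (-t₁) (0 : ℝ),
      f (t₀ + t) ≥ Real.sqrt k * coth (Real.sqrt k * (t₁ + t)) := by
  intro t ht
  obtain ⟨ht1, ht2⟩ := ht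
  set sk := Real.sqrt k with hsk_def
  have hsk : 0 < sk := Real.sqrt_pos.2 hk
  have hsk2 : sk ^ 2 = k := Real.sq_sqrt hk.le
  set s := -t with hs_def
  have hs0 : 0 ≤ s := by simp [hs_def]; linarith
  have hst : s < t₁ := by simp [hs_def]; linarith
  -- u x = -f(t₀ - x), C x = -(sk * coth (sk * (t₁ - x)))
  set u : ℝ → ℝ := fun x => -f (t₀ - x) with hu_def
  set C : ℝ → ℝ := fun x => -(sk * coth (sk * (t₁ - x))) with hC_def
  have hsinh : ∀ x : ℝ, x < t₁ → 0 < Real.sinh (sk * (t₁ - x)) := by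
    intro x hx
    exact Real.sinh_pos_iff.2 (mul_pos hsk (by linarith))
  -- derivative of C
  have hC' : ∀ x : ℝ, x < t₁ → HasDerivAt C (k - C x ^ 2) x := by
    intro x hx
    have hinner : HasDerivAt (fun x : ℝ => sk * (t₁ - x)) (-sk) x := by
      simpa using ((hasDerivAt_id x).const_sub t₁).const_mul sk
    have hcoth := (coth_hasDerivAt (hsinh x hx).ne').comp x hinner
    have h2 : HasDerivAt C (-(sk * ((1 - coth (sk * (t₁ - x)) ^ 2) * -sk))) x :=
      (hcoth.const_mul sk).neg
    convert h2 using 1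
    simp only [hC_def]
    ring_nf
    nlinarith [hsk2]
  -- derivative of u
  have hu' : ∀ x : ℝ, HasDerivAt u (deriv f (t₀ - x)) x := by
    intro x
    have hinner : HasDerivAt (fun x : ℝ => t₀ - x) (-1) x := by
      simpa using (hasDerivAt_id x).const_sub t₀
    have := ((hf (t₀ - x)).hasDerivAt.comp x hinner).neg
    exact this.congr_deriv (by ring)
  -- continuity
  have hCcont : ContinuousOn C (Set.Icc 0 s) := fun x hx =>
    ((hC' x (lt_of_le_of_lt hx.2 hst)).continuousAt).continuousWithinAt
  have hucont : ContinuousOn u (Set.Icc 0 s) := fun x _ =>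
    ((hu' x).continuousAt).continuousWithinAt
  -- bound on C on the compact interval
  obtain ⟨L, hL⟩ := isCompact_Icc.exists_bound_of_continuousOn hCcont
  have hL0 : 0 ≤ L := le_trans (norm_nonneg _) (hL 0 ⟨le_refl 0, hs0⟩)
  set M : ℝ := 2 * L + 1 with hM_def
  -- key comparison for each ε > 0
  have key : ∀ ε : ℝ, 0 < ε → u s ≤ C s + ε * Real.exp (M * s) := by
    intro ε hε
    have := image_le_of_deriv_right_lt_deriv_boundary' (f := u)
      (f' := fun x => deriv f (t₀ - x)) (a := 0) (b := s)
      hucont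
      (fun x _ => (hu' x).hasDerivWithinAt)
      (B := fun x => C x + ε * Real.exp (M * x))
      (B' := fun x => (k - C x ^ 2) + ε * (M * Real.exp (M * x)))
      (by
        simp only [hu_def, hC_def, hinit]
        have : Real.exp (M * 0) = 1 := by simp
        rw [this]
        simp
        nlinarith [hε])
      (hCcont.add (Continuous.continuousOn (by continuity)))
      (fun x hx => by
        have hexp : HasDerivAt (fun x : ℝ => ε * Real.exp (M * x))
            (ε * (M * Real.exp (M * x))) x := by
          have h0 : HasDerivAt (fun x : ℝ => M * x) M x := by
            simpa using (hasDerivAt_id x).const_mul M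
          have := ((Real.hasDerivAt_exp (M * x)).comp x h0).const_mul ε
          refine this.congr_deriv ?_
          ring
        exact ((hC' x (lt_of_lt_of_le hx.2 hst.le)).hasDerivWithinAt).add
          hexp.hasDerivWithinAt)
      ?_ (Set.right_mem_Icc.2 hs0)
    · exact this
    · intro x hx hux
      have hfd := hineq (t₀ - x)
      have hux2 : u x = C x + ε * Real.exp (M * x) := hux
      have hδ : 0 < ε * Real.exp (M * x) := by positivity
      have hCb : |C x| ≤ L := by
        have := hL x ⟨hx.1, hx.2.le⟩
        simpa [Real.norm_eq_abs] using this
      have huk : deriv f (t₀ - x) ≤ k - u x ^ 2 := by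
        simpa [hu_def] using hfd
      have hkey : k - u x ^ 2 < (k - C x ^ 2) + ε * (M * Real.exp (M * x)) := by
        rw [hux2]
        have h1 := (abs_le.1 hCb).1
        have h2 := (abs_le.1 hCb).2
        have hMe : ε * (M * Real.exp (M * x)) = M * (ε * Real.exp (M * x)) := by ring
        nlinarith [hδ, Real.exp_pos (M * x)]
      show deriv f (t₀ - x) < (k - C x ^ 2) + ε * (M * Real.exp (M * x))
      linarith
  -- conclude u s ≤ C s
  have hus : u s ≤ C s := by
    refine le_of_forall_pos_le_add fun ε hε => ?_
    have hE : 0 < Real.exp (M * s) := Real.exp_pos _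
    have h := key (ε / Real.exp (M * s)) (by positivity)
    have hcalc : ε / Real.exp (M * s) * Real.exp (M * s) = ε :=
      div_mul_cancel₀ _ hE.ne'
    have h2 : C s + ε / Real.exp (M * s) * Real.exp (M * s) = C s + ε := by rw [hcalc]
    rw [h2] at h
    exact h
  -- translate back
  have h1 : t₀ - s = t₀ + t := by rw [hs_def]; ring
  have h2 : t₁ - s = t₁ + t := by rw [hs_def]; ring
  have := hus
  simp only [hu_def, hC_def, h1, h2, neg_le_neg_iff] at this
  linarith [this]
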